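/- Suppose 𝒴 = 𝒳. Let β' be the identity receiver policy, β'(x̂,y) = 1 if x̂ = y and 0 otherwise, and let α' ∈ A satisfy ξ(α',β') + ρ·ζ(α') ≤ ξ(α,β') + ρ·ζ(α) for all α ∈ A. Then (α',β') is a Nash equilibrium of the privacy game. -/
import Mathlib


open Finset

noncomputable section

variable {X W Y : Type*} [Fintype X] [Fintype W] [Fintype Y]

/-- The set `A` of sender policies: conditional distributions of `Y` given `(Z, W)`. -/
def senderSet (X W Y : Type*) [Fintype X] [Fintype W] [Fintype Y] :
    Set (Y × X × W → ℝ) :=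
  {α | (∀ t, 0 ≤ α t ∧ α t ≤ 1) ∧ ∀ z w, ∑ y, α (y, z, w) = 1}

/-- The set `B` of receiver policies: conditional distributions of `X̂` given `Y`. -/
def receiverSet (X Y : Type*) [Fintype X] [Fintype Y] : Set (X × Y → ℝ) :=
  {β | (∀ t, 0 ≤ β t ∧ β t ≤ 1) ∧ ∀ y, ∑ x, β (x, y) = 1}

/-- Expected distortion `ξ(α, β) = E{d(X, X̂)}`. -/
def xi (d : X × X → ℝ) (p : X × X × W → ℝ) (α : Y × X × W → ℝ) (β : X × Y → ℝ) : ℝ :=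
  ∑ x, ∑ x', ∑ y, ∑ z, ∑ w, d (x, x') * β (x', y) * α (y, z, w) * p (x, z, w)

/-- Joint distribution `P_α(y, w)` of `(Y, W)` induced by the sender policy `α`. -/
def Pyw (p : X × X × W → ℝ) (α : Y × X × W → ℝ) (y : Y) (w : W) : ℝ :=
  ∑ z, ∑ x, α (y, z, w) * p (x, z, w)

/-- Marginal distribution `P_α(y)` of `Y` induced by the sender policy `α`. -/
def Py (p : X × X × W → ℝ) (α : Y × X × W → ℝ) (y : Y) : ℝ :=
  ∑ w, Pyw p α y w

/-- Marginal distribution `q(w)` of the private information `W`. -/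
def qW (p : X × X × W → ℝ) (w : W) : ℝ := ∑ z, ∑ x, p (x, z, w)

/-- Mutual information `ζ(α) = I(Y; W)`.  Summands with `P_α(y, w) = 0` automatically
vanish since they are multiplied by `P_α(y, w) = 0`. -/
def zeta (p : X × X × W → ℝ) (α : Y × X × W → ℝ) : ℝ :=
  ∑ y, ∑ w, Pyw p α y w * Real.log (Pyw p α y w / (Py p α y * qW p w))

/-- Sender cost `U(α, β) = ξ(α, β) + ρ ζ(α)`. -/
def Ucost (d : X × X → ℝ) (p : X × X × W → ℝ) (ρ : ℝ)
    (α : Y × X × W → ℝ) (β : X × Y → ℝ) : ℝ :=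
  xi d p α β + ρ * zeta p α

/-- Receiver cost `V(α, β) = ξ(α, β)`. -/
def Vcost (d : X × X → ℝ) (p : X × X × W → ℝ)
    (α : Y × X × W → ℝ) (β : X × Y → ℝ) : ℝ :=
  xi d p α β

/-- Potential function `Ψ(α, β) = ξ(α, β) + ρ ζ(α)`. -/
def Psi (d : X × X → ℝ) (p : X × X × W → ℝ) (ρ : ℝ)
    (α : Y × X × W → ℝ) (β : X × Y → ℝ) : ℝ :=
  xi d p α β + ρ * zeta p α

/-- `(α, β)` is a Nash equilibrium of the privacy game. -/
def IsNash (d : X × X → ℝ) (p : X × X × W → ℝ) (ρ : ℝ)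
    (α : Y × X × W → ℝ) (β : X × Y → ℝ) : Prop :=
  α ∈ senderSet X W Y ∧ β ∈ receiverSet X Y ∧
    (∀ α' ∈ senderSet X W Y, Ucost d p ρ α β ≤ Ucost d p ρ α' β) ∧
    (∀ β' ∈ receiverSet X Y, Vcost d p α β ≤ Vcost d p α β')

/-- `(α, β)` is an `ε`-Nash equilibrium of the privacy game. -/
def IsEpsNash (d : X × X → ℝ) (p : X × X × W → ℝ) (ρ ε : ℝ)
    (α : Y × X × W → ℝ) (β : X × Y → ℝ) : Prop :=
  α ∈ senderSet X W Y ∧ β ∈ receiverSet X Y ∧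
    (∀ α' ∈ senderSet X W Y, Ucost d p ρ α β ≤ Ucost d p ρ α' β + ε) ∧
    (∀ β' ∈ receiverSet X Y, Vcost d p α β ≤ Vcost d p α β' + ε)


private lemma sum_rot3 {I K C : Type*} [Fintype I] [Fintype K] [Fintype C] (f : I → K → C → ℝ) :
    ∑ i, ∑ k, ∑ c, f i k c = ∑ c, ∑ i, ∑ k, f i k c := by
  have h1 : ∀ i, ∑ k, ∑ c, f i k c = ∑ c, ∑ k, f i k c := fun i => Finset.sum_comm
  simp_rw [h1]
  exact Finset.sum_comm

private lemma sub_le_mul_log {a c : ℝ} (ha : 0 ≤ a) (hc : 0 ≤ c) (h : c = 0 → a = 0) :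
    a - c ≤ a * Real.log (a / c) := by
  rcases eq_or_lt_of_le ha with h0 | h0
  · simp [← h0]; linarith
  · have hcpos : 0 < c := lt_of_le_of_ne hc fun hh => by have := h hh.symm; linarith
    have hlog := Real.log_le_sub_one_of_pos (show (0:ℝ) < c / a from div_pos hcpos h0)
    have h1 : a * Real.log (c / a) ≤ a * (c / a - 1) :=
      mul_le_mul_of_nonneg_left hlog h0.le
    have h2 : a * (c / a) = c := by field_simp
    have h3 : Real.log (a / c) = - Real.log (c / a) := by
      rw [← Real.log_inv, inv_div]
    rw [h3]; nlinarith

private lemma log_sum_ineq {ι : Type*} [Fintype ι] (a b : ι → ℝ)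
    (ha : ∀ i, 0 ≤ a i) (hb : ∀ i, 0 ≤ b i) (hab : ∀ i, b i = 0 → a i = 0) :
    (∑ i, a i) * Real.log ((∑ i, a i) / (∑ i, b i)) ≤ ∑ i, a i * Real.log (a i / b i) := by
  have hA : 0 ≤ ∑ i, a i := Finset.sum_nonneg fun i _ => ha i
  have hB : 0 ≤ ∑ i, b i := Finset.sum_nonneg fun i _ => hb i
  rcases eq_or_lt_of_le hB with hB0 | hBpos
  · -- B = 0: all b i = 0, hence all a i = 0
    have hb0 : ∀ i ∈ Finset.univ, b i = 0 :=
      (Finset.sum_eq_zero_iff_of_nonneg fun i _ => hb i).mp hB0.symm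
    have ha0 : ∀ i, a i = 0 := fun i => hab i (hb0 i (Finset.mem_univ i))
    simp [ha0]
  rcases eq_or_lt_of_le hA with hA0 | hApos
  · have ha0 : ∀ i ∈ Finset.univ, a i = 0 :=
      (Finset.sum_eq_zero_iff_of_nonneg fun i _ => ha i).mp hA0.symm
    have ha0' : ∀ i, a i = 0 := fun i => ha0 i (Finset.mem_univ i)
    simp [ha0']
  set A := ∑ i, a i with hAdef
  set B := ∑ i, b i with hBdef
  have key : ∀ i, a i * Real.log (A / B) ≤ a i * Real.log (a i / b i) - (a i - b i * (A / B)) := by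
    intro i
    have hstep := sub_le_mul_log (ha i) (c := b i * (A / B))
      (mul_nonneg (hb i) (div_nonneg hApos.le hBpos.le))
      (fun hh => by
        rcases mul_eq_zero.mp hh with h1 | h1
        · exact hab i h1
        · exact absurd h1 (ne_of_gt (div_pos hApos hBpos)))
    rcases eq_or_lt_of_le (ha i) with hai0 | haipos
    · simp [← hai0]; exact mul_nonneg (hb i) (div_nonneg hApos.le hBpos.le)
    · have hbi : 0 < b i := lt_of_le_of_ne (hb i) fun hh => by
        have := hab i hh.symm; linarith
      have hsplit : Real.log (a i / (b i * (A / B))) =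
          Real.log (a i / b i) - Real.log (A / B) := by
        rw [div_mul_eq_div_div, Real.log_div (by positivity) (by positivity)]
      rw [hsplit] at hstep
      nlinarith
  have hcancel : B * (A / B) = A := by field_simp
  calc A * Real.log (A / B) = ∑ i, a i * Real.log (A / B) := by rw [← Finset.sum_mul]
    _ ≤ ∑ i, (a i * Real.log (a i / b i) - (a i - b i * (A / B))) :=
        Finset.sum_le_sum fun i _ => key i
    _ = ∑ i, a i * Real.log (a i / b i) - (A - B * (A / B)) := by
        rw [Finset.sum_sub_distrib, Finset.sum_sub_distrib, ← Finset.sum_mul]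
    _ = ∑ i, a i * Real.log (a i / b i) := by rw [hcancel]; ring

/-- with `𝒴 = 𝒳`, the identity receiver policy `β'` together with any
sender policy `α'` minimizing `ξ(·, β') + ρ ζ(·)` over `A` is a Nash equilibrium. -/
theorem identity_receiver_equilibrium [Nonempty X] [Nonempty W] [DecidableEq X]
    (p : X × X × W → ℝ) (hp0 : ∀ t, 0 ≤ p t)
    (hp1 : ∑ x, ∑ z, ∑ w, p (x, z, w) = 1)
    (d : X × X → ℝ) (hd : ∀ t, 0 ≤ d t)
    (ρ : ℝ) (hρ : 0 ≤ ρ)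
    (β' : X × X → ℝ) (hβ' : ∀ t, β' t = if t.1 = t.2 then 1 else 0)
    (α' : X × X × W → ℝ) (hα'A : α' ∈ senderSet X W X)
    (hα'min : ∀ α ∈ senderSet X W X,
      xi d p α' β' + ρ * zeta p α' ≤ xi d p α β' + ρ * zeta p α) :
    IsNash d p ρ α' β' := by
  obtain ⟨hα'0, hα'sum⟩ := hα'A
  have hα'nn : ∀ t, 0 ≤ α' t := fun t => (hα'0 t).1
  have hβ'B : β' ∈ receiverSet X X := by
    refine ⟨fun t => ?_, fun y => ?_⟩
    · rw [hβ']; split <;> norm_num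
    · simp only [hβ']
      simp
  -- xi against the identity receiver
  have xiId : ∀ α : X × X × W → ℝ, xi d p α β' =
      ∑ x, ∑ y, ∑ z, ∑ w, d (x, y) * α (y, z, w) * p (x, z, w) := by
    intro α
    unfold xi
    refine Finset.sum_congr rfl fun x _ => ?_
    rw [Finset.sum_comm]
    refine Finset.sum_congr rfl fun y _ => ?_
    simp only [hβ', mul_ite, mul_one, mul_zero, ite_mul, zero_mul]
    rw [Finset.sum_eq_single y]
    · simp
    · intro b _ hb
      simp [hb]
    · simp
  refine ⟨⟨hα'0, hα'sum⟩, hβ'B, fun α hα => hα'min α hα, ?_⟩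
  intro β hβ
  obtain ⟨hβ0, hβsum⟩ := hβ
  -- the composed sender policy
  set α₂ : X × X × W → ℝ := fun t => ∑ y, β (t.1, y) * α' (y, t.2.1, t.2.2) with hα₂def
  have hα₂app : ∀ y' z w, α₂ (y', z, w) = ∑ y, β (y', y) * α' (y, z, w) := fun _ _ _ => rfl
  have hα₂A : α₂ ∈ senderSet X W X := by
    refine ⟨fun t => ⟨?_, ?_⟩, fun z w => ?_⟩
    · exact Finset.sum_nonneg fun y _ => mul_nonneg (hβ0 _).1 (hα'nn _)
    · calc ∑ y, β (t.1, y) * α' (y, t.2.1, t.2.2)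
          ≤ ∑ y, α' (y, t.2.1, t.2.2) := Finset.sum_le_sum fun y _ => by
            nlinarith [(hβ0 (t.1, y)).1, (hβ0 (t.1, y)).2, hα'nn (y, t.2.1, t.2.2)]
        _ = 1 := hα'sum _ _
    · simp only [hα₂app]
      calc ∑ y', ∑ y, β (y', y) * α' (y, z, w)
          = ∑ y, ∑ y', β (y', y) * α' (y, z, w) := Finset.sum_comm
        _ = ∑ y, (∑ y', β (y', y)) * α' (y, z, w) := by simp [Finset.sum_mul]
        _ = ∑ y, α' (y, z, w) := by
            refine Finset.sum_congr rfl fun y _ => ?_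
            rw [hβsum y, one_mul]
        _ = 1 := hα'sum z w
  -- xi of the composed policy against the identity equals xi of α' against β
  have xi_comp : xi d p α₂ β' = xi d p α' β := by
    rw [xiId α₂]
    unfold xi
    refine Finset.sum_congr rfl fun x _ => ?_
    refine Finset.sum_congr rfl fun y' _ => ?_
    rw [← sum_rot3 (fun z w y => d (x, y') * β (y', y) * α' (y, z, w) * p (x, z, w))]
    refine Finset.sum_congr rfl fun z _ => Finset.sum_congr rfl fun w _ => ?_
    rw [hα₂app, Finset.mul_sum, Finset.sum_mul]
    exact Finset.sum_congr rfl fun y _ => by ring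
  -- basic positivity facts
  have hPyw'nn : ∀ y w, 0 ≤ Pyw p α' y w := fun y w =>
    Finset.sum_nonneg fun z _ => Finset.sum_nonneg fun x _ => mul_nonneg (hα'nn _) (hp0 _)
  have hPy'nn : ∀ y, 0 ≤ Py p α' y := fun y => Finset.sum_nonneg fun w _ => hPyw'nn y w
  have hqnn : ∀ w, 0 ≤ qW p w := fun w =>
    Finset.sum_nonneg fun z _ => Finset.sum_nonneg fun x _ => hp0 _
  have hPy_zero : ∀ y w, Py p α' y = 0 → Pyw p α' y w = 0 := by
    intro y w h
    unfold Py at h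
    exact (Finset.sum_eq_zero_iff_of_nonneg fun w' _ => hPyw'nn y w').mp h w (Finset.mem_univ w)
  have hPyw_le_q : ∀ y w, Pyw p α' y w ≤ qW p w := by
    intro y w
    unfold Pyw qW
    refine Finset.sum_le_sum fun z _ => Finset.sum_le_sum fun x _ => ?_
    nlinarith [(hα'0 (y, z, w)).2, (hα'0 (y, z, w)).1, hp0 (x, z, w)]
  have hq_zero : ∀ y w, qW p w = 0 → Pyw p α' y w = 0 := fun y w h =>
    le_antisymm (h ▸ hPyw_le_q y w) (hPyw'nn y w)
  -- linearity of Pyw and Py in the post-processing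
  have hPyw₂ : ∀ y' w, Pyw p α₂ y' w = ∑ y, β (y', y) * Pyw p α' y w := by
    intro y' w
    unfold Pyw
    simp only [hα₂app]
    calc ∑ z, ∑ x, (∑ y, β (y', y) * α' (y, z, w)) * p (x, z, w)
        = ∑ z, ∑ x, ∑ y, β (y', y) * α' (y, z, w) * p (x, z, w) := by
          simp [Finset.sum_mul]
      _ = ∑ y, ∑ z, ∑ x, β (y', y) * α' (y, z, w) * p (x, z, w) :=
          sum_rot3 (fun z x y => β (y', y) * α' (y, z, w) * p (x, z, w))
      _ = ∑ y, β (y', y) * ∑ z, ∑ x, α' (y, z, w) * p (x, z, w) := by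
          refine Finset.sum_congr rfl fun y _ => ?_
          rw [Finset.mul_sum]
          refine Finset.sum_congr rfl fun z _ => ?_
          rw [Finset.mul_sum]
          exact Finset.sum_congr rfl fun x _ => by ring
  have hPy₂ : ∀ y', Py p α₂ y' = ∑ y, β (y', y) * Py p α' y := by
    intro y'
    unfold Py
    simp_rw [hPyw₂]
    rw [Finset.sum_comm]
    exact Finset.sum_congr rfl fun y _ => by rw [← Finset.mul_sum]
  -- data-processing inequality
  have hzle : zeta p α₂ ≤ zeta p α' := by
    unfold zeta
    have step1 : ∀ y' w,
        Pyw p α₂ y' w * Real.log (Pyw p α₂ y' w / (Py p α₂ y' * qW p w)) ≤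
        ∑ y, β (y', y) * (Pyw p α' y w * Real.log (Pyw p α' y w / (Py p α' y * qW p w))) := by
      intro y' w
      have ha : ∀ y, 0 ≤ β (y', y) * Pyw p α' y w := fun y =>
        mul_nonneg (hβ0 _).1 (hPyw'nn y w)
      have hb : ∀ y, 0 ≤ β (y', y) * (Py p α' y * qW p w) := fun y =>
        mul_nonneg (hβ0 _).1 (mul_nonneg (hPy'nn y) (hqnn w))
      have hab : ∀ y, β (y', y) * (Py p α' y * qW p w) = 0 → β (y', y) * Pyw p α' y w = 0 := by
        intro y hh
        rcases mul_eq_zero.mp hh with h1 | h1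
        · rw [h1, zero_mul]
        · rcases mul_eq_zero.mp h1 with h2 | h2
          · rw [hPy_zero y w h2, mul_zero]
          · rw [hq_zero y w h2, mul_zero]
      have hls := log_sum_ineq (fun y => β (y', y) * Pyw p α' y w)
        (fun y => β (y', y) * (Py p α' y * qW p w)) ha hb hab
      have hden : Py p α₂ y' * qW p w = ∑ y, β (y', y) * (Py p α' y * qW p w) := by
        rw [hPy₂, Finset.sum_mul]
        exact Finset.sum_congr rfl fun y _ => by ring
      rw [hPyw₂, hden]
      refine hls.trans (le_of_eq (Finset.sum_congr rfl fun y _ => ?_))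
      rcases eq_or_ne (β (y', y)) 0 with hb0 | hb0
      · simp [hb0]
      · rw [mul_div_mul_left _ _ hb0]
        ring
    calc ∑ y', ∑ w, Pyw p α₂ y' w * Real.log (Pyw p α₂ y' w / (Py p α₂ y' * qW p w))
        ≤ ∑ y', ∑ w, ∑ y, β (y', y) *
            (Pyw p α' y w * Real.log (Pyw p α' y w / (Py p α' y * qW p w))) :=
          Finset.sum_le_sum fun y' _ => Finset.sum_le_sum fun w _ => step1 y' w
      _ = ∑ y', ∑ y, ∑ w, β (y', y) *
            (Pyw p α' y w * Real.log (Pyw p α' y w / (Py p α' y * qW p w))) :=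
          Finset.sum_congr rfl fun y' _ => Finset.sum_comm
      _ = ∑ y, ∑ y', ∑ w, β (y', y) *
            (Pyw p α' y w * Real.log (Pyw p α' y w / (Py p α' y * qW p w))) :=
          Finset.sum_comm
      _ = ∑ y, ∑ w, ∑ y', β (y', y) *
            (Pyw p α' y w * Real.log (Pyw p α' y w / (Py p α' y * qW p w))) :=
          Finset.sum_congr rfl fun y _ => Finset.sum_comm
      _ = ∑ y, ∑ w, Pyw p α' y w * Real.log (Pyw p α' y w / (Py p α' y * qW p w)) := by
          refine Finset.sum_congr rfl fun y _ => Finset.sum_congr rfl fun w _ => ?_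
          rw [← Finset.sum_mul, hβsum y, one_mul]
  -- conclude
  have hmin := hα'min α₂ hα₂A
  have hρz : ρ * zeta p α₂ ≤ ρ * zeta p α' := mul_le_mul_of_nonneg_left hzle hρ
  show xi d p α' β' ≤ xi d p α' β
  rw [xi_comp] at hmin
  linarith
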